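/- Let d be a nonnegative travel-time function on N = {0} ∪ C with d(i,i) = 0 that satisfies the triangle inequality d(i,j) ≤ d(i,l) + d(l,j) for all i, l, j ∈ N, let all processing times be zero (p_c = 0 for every customer c), and let the vehicle capacity satisfy k ≥ n. Then the optimal (minimum) makespan over all feasible VRP-RPD schedules equals the min-max VRP value. (This is the correctness of the reduction used in the paper's NP-hardness proof: with zero processing times and non-binding capacity, VRP-RPD coincides with the min-max VRP.) -/

import Mathlib

namespace VRPRPD

/-- The kind of an operation at a customer: a dropoff or a pickup. -/
inductive OpKind : Type
  | drop
  | pick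
deriving DecidableEq

/-- One scheduled operation of a vehicle: the customer served, the kind of
operation, and the arrival and departure times of the vehicle at the customer. -/
structure Entry (n : ℕ) : Type where
  cust : Fin n
  kind : OpKind
  arr : ℝ
  dep : ℝ

/-- A schedule assigns to each of the `m` vehicles a finite sequence of
timed operations. -/
abbrev Schedule (n m : ℕ) : Type := Fin m → List (Entry n)

/-- The location of customer `c` in `N = {0} ∪ C`, where the depot is `0` and
customer `c` is coded as location `c + 1` in `Fin (n+1)`. -/
def loc {n : ℕ} (c : Fin n) : Fin (n + 1) := c.succ

/-- Total number of operations of kind `k` performed at customer `c` over all vehicles. -/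
def countOp {n m : ℕ} (S : Schedule n m) (c : Fin n) (k : OpKind) : ℕ :=
  ∑ v : Fin m, (S v).countP (fun e => decide (e.cust = c ∧ e.kind = k))

/-- The load (number of resources carried) of a vehicle after performing the
operations in the list `l`, having started at the depot with `kcap` resources:
a dropoff decreases the load by one, a pickup increases it by one. -/
def loadAfter {n : ℕ} (kcap : ℕ) (l : List (Entry n)) : ℤ :=
  (kcap : ℤ) - (l.countP (fun e => decide (e.kind = OpKind.drop)) : ℤ)
    + (l.countP (fun e => decide (e.kind = OpKind.pick)) : ℤ)

/-- Feasibility of a VRP-RPD schedule for travel times `d`, processing times `p`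
and vehicle capacity `kcap`: each customer gets exactly one dropoff and one pickup
(possibly by different vehicles); each vehicle starts at the depot at time `0`
carrying `kcap` resources and travels between consecutive operation locations
taking at least the corresponding travel time (waiting allowed); the load stays
between `0` and `kcap` along each route (so a dropoff requires load at least one
and a pickup load at most `kcap - 1`); and the pickup of customer `c` (which
occurs at the departure of the pickup vehicle) happens no earlier than `p c` time
units after its dropoff (which occurs at the arrival of the dropoff vehicle). -/
structure Feasible {n m : ℕ} (d : Fin (n + 1) → Fin (n + 1) → ℝ) (p : Fin n → ℝ)
    (kcap : ℕ) (S : Schedule n m) : Prop where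
  drop_once : ∀ c : Fin n, countOp S c OpKind.drop = 1
  pick_once : ∀ c : Fin n, countOp S c OpKind.pick = 1
  arr_le_dep : ∀ v : Fin m, ∀ e ∈ S v, e.arr ≤ e.dep
  first_arr : ∀ v : Fin m, ∀ e ∈ (S v).head?, d 0 (loc e.cust) ≤ e.arr
  travel : ∀ v : Fin m, ∀ r : ℕ, (h : r + 1 < (S v).length) →
    ((S v).get ⟨r, Nat.lt_of_succ_lt h⟩).dep
      + d (loc ((S v).get ⟨r, Nat.lt_of_succ_lt h⟩).cust)
          (loc ((S v).get ⟨r + 1, h⟩).cust)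
      ≤ ((S v).get ⟨r + 1, h⟩).arr
  load_nonneg : ∀ v : Fin m, ∀ r : ℕ, 0 ≤ loadAfter kcap ((S v).take r)
  load_le_cap : ∀ v : Fin m, ∀ r : ℕ, loadAfter kcap ((S v).take r) ≤ (kcap : ℤ)
  precedence : ∀ (c : Fin n) (v w : Fin m) (eD eP : Entry n),
    eD ∈ S v → eP ∈ S w → eD.cust = c → eD.kind = OpKind.drop →
    eP.cust = c → eP.kind = OpKind.pick → eD.arr + p c ≤ eP.dep

/-- The time at which vehicle `v` returns to the depot: the departure time from
its last operation plus the travel time back to the depot (`0` if the vehicle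
performs no operation and stays at the depot). -/
def returnTime {n m : ℕ} (d : Fin (n + 1) → Fin (n + 1) → ℝ) (S : Schedule n m)
    (v : Fin m) : ℝ :=
  match (S v).getLast? with
  | none => 0
  | some e => e.dep + d (loc e.cust) 0

/-- The makespan of a schedule: the maximum over vehicles of the depot return time. -/
def makespan {n m : ℕ} (d : Fin (n + 1) → Fin (n + 1) → ℝ) (S : Schedule n m) : ℝ :=
  ((List.finRange m).map (returnTime d S)).foldr max 0

/-- Length of a path through a list of locations: the sum of the travel times of
consecutive pairs. -/
def pathLen {n : ℕ} (d : Fin (n + 1) → Fin (n + 1) → ℝ) : List (Fin (n + 1)) → ℝ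
  | [] => 0
  | [_] => 0
  | a :: b :: rest => d a b + pathLen d (b :: rest)

/-- Tour length of an ordered sequence `c₁, …, c_L` of customers:
`d(0,c₁) + Σ d(cᵢ,cᵢ₊₁) + d(c_L,0)`, and `0` for the empty sequence. -/
def tourLen {n : ℕ} (d : Fin (n + 1) → Fin (n + 1) → ℝ) (l : List (Fin n)) : ℝ :=
  match l with
  | [] => 0
  | _ => pathLen d ((0 : Fin (n + 1)) :: l.map loc ++ [(0 : Fin (n + 1))])

/-- `routes` is a partition of the `n` customers into at most `m` ordered
sequences: every customer occurs exactly once among all the sequences. -/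
def IsPartition {n m : ℕ} (routes : Fin m → List (Fin n)) : Prop :=
  ∀ c : Fin n, (∑ v : Fin m, (routes v).count c) = 1

/-- The maximum tour length over the sequences of a partition. -/
def maxTour {n m : ℕ} (d : Fin (n + 1) → Fin (n + 1) → ℝ)
    (routes : Fin m → List (Fin n)) : ℝ :=
  ((List.finRange m).map (fun v => tourLen d (routes v))).foldr max 0

/-- The min-max VRP value: the minimum, over partitions of the customers into at
most `m` ordered sequences, of the maximum tour length of a sequence. -/
noncomputable def minmaxVRP (n m : ℕ) (d : Fin (n + 1) → Fin (n + 1) → ℝ) : ℝ :=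
  sInf {T : ℝ | ∃ routes : Fin m → List (Fin n), IsPartition routes ∧ maxTour d routes = T}

/-- The optimal VRP-RPD makespan: the minimum makespan over feasible schedules. -/
noncomputable def optMakespan (n m : ℕ) (d : Fin (n + 1) → Fin (n + 1) → ℝ)
    (p : Fin n → ℝ) (kcap : ℕ) : ℝ :=
  sInf {T : ℝ | ∃ S : Schedule n m, Feasible d p kcap S ∧ makespan d S = T}

end VRPRPD


namespace VRPRPD

section Aux

variable {n m : ℕ}

lemma foldr_max_nonneg (l : List ℝ) : 0 ≤ l.foldr max 0 := by
  induction l with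
  | nil => simp
  | cons a l ih => exact le_trans ih (le_max_right _ _)

lemma foldr_max_le {α : Type*} (L : List α) (f g : α → ℝ)
    (h : ∀ a ∈ L, f a ≤ g a) :
    (L.map f).foldr max 0 ≤ (L.map g).foldr max 0 := by
  induction L with
  | nil => simp
  | cons a L ih =>
      simp only [List.map_cons, List.foldr_cons]
      exact max_le_max (h a (by simp)) (ih (fun b hb => h b (by simp [hb])))

@[simp] lemma pathLen_nil (d : Fin (n + 1) → Fin (n + 1) → ℝ) :
    pathLen d ([] : List (Fin (n + 1))) = 0 := rfl

@[simp] lemma pathLen_single (d : Fin (n + 1) → Fin (n + 1) → ℝ) (a : Fin (n + 1)) :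
    pathLen d [a] = 0 := rfl

@[simp] lemma pathLen_cons_cons (d : Fin (n + 1) → Fin (n + 1) → ℝ)
    (a b : Fin (n + 1)) (rest : List (Fin (n + 1))) :
    pathLen d (a :: b :: rest) = d a b + pathLen d (b :: rest) := rfl

lemma pathLen_skip (d : Fin (n + 1) → Fin (n + 1) → ℝ)
    (hd_tri : ∀ i l j, d i j ≤ d i l + d l j)
    (a b : Fin (n + 1)) (X : List (Fin (n + 1))) (hX : X ≠ []) :
    pathLen d (a :: X) ≤ d a b + pathLen d (b :: X) := by
  cases X with
  | nil => exact absurd rfl hX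
  | cons x rest =>
      simp only [pathLen_cons_cons]
      have := hd_tri a b x
      linarith

lemma getLast?_cons_of_ne_nil {α : Type*} (a : α) {l : List α} (h : l ≠ []) :
    (a :: l).getLast? = l.getLast? := by
  cases l with
  | nil => exact absurd rfl h
  | cons b l => exact List.getLast?_cons_cons ..

/-- Chain predicate: the entries `es` can be feasibly executed starting from
location `prev` at time `t`. -/
inductive Good (d : Fin (n + 1) → Fin (n + 1) → ℝ) :
    Fin (n + 1) → ℝ → List (Entry n) → Prop
  | nil (prev : Fin (n + 1)) (t : ℝ) : Good d prev t []
  | cons {prev : Fin (n + 1)} {t : ℝ} {e : Entry n} {es : List (Entry n)}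
      (h1 : t + d prev (loc e.cust) ≤ e.arr) (h2 : e.arr ≤ e.dep)
      (h3 : Good d (loc e.cust) e.dep es) : Good d prev t (e :: es)

lemma good_arr_le_dep {d : Fin (n + 1) → Fin (n + 1) → ℝ} {prev t es}
    (hg : Good d prev t es) : ∀ e ∈ es, e.arr ≤ e.dep := by
  induction hg with
  | nil => simp
  | cons h1 h2 h3 ih =>
      intro f hf
      rcases List.mem_cons.1 hf with rfl | hf
      · exact h2
      · exact ih f hf

lemma good_head {d : Fin (n + 1) → Fin (n + 1) → ℝ} {prev t es}
    (hg : Good d prev t es) : ∀ e ∈ es.head?, t + d prev (loc e.cust) ≤ e.arr := by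
  cases hg with
  | nil => simp
  | cons h1 h2 h3 =>
      intro f hf
      simp only [List.head?_cons, Option.mem_def, Option.some.injEq] at hf
      subst hf
      exact h1

lemma good_dep_lb {d : Fin (n + 1) → Fin (n + 1) → ℝ}
    (hd_nonneg : ∀ i j, 0 ≤ d i j) {es : List (Entry n)} {prev t}
    (hg : Good d prev t es) : ∀ e ∈ es, t ≤ e.dep := by
  induction hg with
  | nil => simp
  | cons h1 h2 h3 ih =>
      rename_i prev' t' e' es' 
      intro f hf
      have hlb : t' ≤ e'.dep := by
        have := hd_nonneg prev' (loc e'.cust); linarith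
      rcases List.mem_cons.1 hf with rfl | hf
      · exact hlb
      · exact le_trans hlb (ih f hf)

lemma good_travel {d : Fin (n + 1) → Fin (n + 1) → ℝ} :
    ∀ {es : List (Entry n)} {prev t}, Good d prev t es → ∀ r : ℕ, (h : r + 1 < es.length) →
      (es.get ⟨r, Nat.lt_of_succ_lt h⟩).dep
        + d (loc (es.get ⟨r, Nat.lt_of_succ_lt h⟩).cust)
            (loc (es.get ⟨r + 1, h⟩).cust)
        ≤ (es.get ⟨r + 1, h⟩).arr := by
  intro es
  induction es with
  | nil => intro prev t hg r h; simp at h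
  | cons e es ih =>
      intro prev t hg r h
      cases hg with
      | cons h1 h2 h3 =>
          match r with
          | 0 =>
              cases es with
              | nil => simp at h
              | cons e1 es' =>
                  cases h3 with
                  | cons h1' h2' h3' => simpa using h1'
          | (r + 1) =>
              have h' : r + 1 < es.length := by simpa using h
              simpa using ih h3 r h'

lemma toGood {d : Fin (n + 1) → Fin (n + 1) → ℝ} :
    ∀ (es : List (Entry n)) (prev : Fin (n + 1)) (t : ℝ),
      (∀ e ∈ es.head?, t + d prev (loc e.cust) ≤ e.arr) →
      (∀ e ∈ es, e.arr ≤ e.dep) →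
      (∀ r : ℕ, (h : r + 1 < es.length) →
        (es.get ⟨r, Nat.lt_of_succ_lt h⟩).dep
          + d (loc (es.get ⟨r, Nat.lt_of_succ_lt h⟩).cust)
              (loc (es.get ⟨r + 1, h⟩).cust)
          ≤ (es.get ⟨r + 1, h⟩).arr) →
      Good d prev t es := by
  intro es
  induction es with
  | nil => intro prev t _ _ _; exact Good.nil prev t
  | cons e es ih =>
      intro prev t hhead hdep htravel
      refine Good.cons (hhead e (by simp)) (hdep e (by simp)) ?_
      apply ih
      · intro e' he'
        cases es with
        | nil => simp at he'
        | cons e1 es' =>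
            simp only [List.head?_cons, Option.mem_def, Option.some.injEq] at he'
            subst he'
            simpa using htravel 0 (by simp)
      · intro e' he'
        exact hdep e' (List.mem_cons_of_mem _ he')
      · intro r h
        simpa using htravel (r + 1) (by simpa using h)

/-- The customers dropped off by a list of operations, in order. -/
def dropCusts (es : List (Entry n)) : List (Fin n) :=
  es.filterMap (fun e => if e.kind = OpKind.drop then some e.cust else none)

lemma count_dropCusts (es : List (Entry n)) (c : Fin n) :
    (dropCusts es).count c
      = es.countP (fun e => decide (e.cust = c ∧ e.kind = OpKind.drop)) := by
  induction es with
  | nil => simp [dropCusts]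
  | cons e es ih =>
      rcases e with ⟨ec, ek, ea, ed⟩
      cases ek <;> by_cases hc : ec = c <;>
        simp_all [dropCusts, List.filterMap_cons, List.count_cons, List.countP_cons, hc]

lemma good_tour {d : Fin (n + 1) → Fin (n + 1) → ℝ}
    (hd_nonneg : ∀ i j, 0 ≤ d i j) (hd_tri : ∀ i l j, d i j ≤ d i l + d l j) :
    ∀ {es : List (Entry n)} {prev t}, Good d prev t es → ∀ e, es.getLast? = some e →
      t + pathLen d (prev :: ((dropCusts es).map loc ++ [0]))
        ≤ e.dep + d (loc e.cust) 0 := by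
  intro es
  induction es with
  | nil => intro prev t hg e he; simp at he
  | cons e0 es ih =>
      intro prev t hg e he
      cases hg with
      | cons h1 h2 h3 =>
      cases es with
      | nil =>
          simp only [List.getLast?_singleton, Option.some.injEq] at he
          subst he
          cases hk : e0.kind with
          | drop =>
              have hdc : dropCusts [e0] = [e0.cust] := by simp [dropCusts, hk]
              rw [hdc]
              simp only [List.map_cons, List.map_nil, List.nil_append,
                List.cons_append, pathLen_cons_cons, pathLen_single]
              linarith
          | pick =>
              have hdc : dropCusts [e0] = ([] : List (Fin n)) := by simp [dropCusts, hk]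
              rw [hdc]
              simp only [List.map_nil, List.nil_append, pathLen_cons_cons, pathLen_single]
              have := hd_tri prev (loc e0.cust) 0
              linarith
      | cons e1 es' =>
          rw [List.getLast?_cons_cons] at he
          have hih := ih h3 e he
          cases hk : e0.kind with
          | drop =>
              have hdc : dropCusts (e0 :: e1 :: es') = e0.cust :: dropCusts (e1 :: es') := by
                simp [dropCusts, List.filterMap_cons, hk]
              rw [hdc]
              simp only [List.map_cons, List.cons_append, pathLen_cons_cons]
              linarith
          | pick =>
              have hdc : dropCusts (e0 :: e1 :: es') = dropCusts (e1 :: es') := by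
                simp [dropCusts, List.filterMap_cons, hk]
              rw [hdc]
              have hskip := pathLen_skip d hd_tri prev (loc e0.cust)
                ((dropCusts (e1 :: es')).map loc ++ [0]) (by simp)
              linarith

/-- The canonical schedule entries visiting a route, dropping and immediately
picking up at each customer. -/
def mkEntries (d : Fin (n + 1) → Fin (n + 1) → ℝ) :
    ℝ → Fin (n + 1) → List (Fin n) → List (Entry n)
  | _, _, [] => []
  | t, prev, c :: rest =>
      ⟨c, OpKind.drop, t + d prev (loc c), t + d prev (loc c)⟩ ::
      ⟨c, OpKind.pick, t + d prev (loc c), t + d prev (loc c)⟩ ::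
      mkEntries d (t + d prev (loc c)) (loc c) rest

lemma mk_good {d : Fin (n + 1) → Fin (n + 1) → ℝ} (hd_refl : ∀ i, d i i = 0) :
    ∀ (l : List (Fin n)) (t : ℝ) (prev : Fin (n + 1)),
      Good d prev t (mkEntries d t prev l) := by
  intro l
  induction l with
  | nil => intro t prev; exact Good.nil _ _
  | cons c rest ih =>
      intro t prev
      refine Good.cons le_rfl le_rfl ?_
      refine Good.cons ?_ le_rfl (ih _ _)
      simp [hd_refl]

lemma mk_countP {d : Fin (n + 1) → Fin (n + 1) → ℝ} (c : Fin n) (k : OpKind) :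
    ∀ (l : List (Fin n)) (t : ℝ) (prev : Fin (n + 1)),
      (mkEntries d t prev l).countP (fun e => decide (e.cust = c ∧ e.kind = k))
        = l.count c := by
  intro l
  induction l with
  | nil => intro t prev; simp [mkEntries]
  | cons c0 rest ih =>
      intro t prev
      have ih' := ih (t + d prev (loc c0)) (loc c0)
      cases k <;> by_cases hc : c0 = c <;>
        simp [mkEntries, List.countP_cons, List.count_cons, hc] at ih' ⊢ <;> omega

lemma mk_mem_cust {d : Fin (n + 1) → Fin (n + 1) → ℝ} :
    ∀ (l : List (Fin n)) (t : ℝ) (prev : Fin (n + 1)) (e : Entry n),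
      e ∈ mkEntries d t prev l → e.cust ∈ l := by
  intro l
  induction l with
  | nil => intro t prev e h; simp [mkEntries] at h
  | cons c0 rest ih =>
      intro t prev e h
      simp only [mkEntries, List.mem_cons] at h
      rcases h with rfl | rfl | h
      · simp
      · simp
      · exact List.mem_cons_of_mem _ (ih _ _ _ h)

lemma mk_arr_dep {d : Fin (n + 1) → Fin (n + 1) → ℝ} :
    ∀ (l : List (Fin n)) (t : ℝ) (prev : Fin (n + 1)) (e : Entry n),
      e ∈ mkEntries d t prev l → e.arr = e.dep := by
  intro l
  induction l with
  | nil => intro t prev e h; simp [mkEntries] at h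
  | cons c0 rest ih =>
      intro t prev e h
      simp only [mkEntries, List.mem_cons] at h
      rcases h with rfl | rfl | h
      · rfl
      · rfl
      · exact ih _ _ _ h

lemma mk_arr_eq {d : Fin (n + 1) → Fin (n + 1) → ℝ} (c : Fin n) :
    ∀ (l : List (Fin n)) (t : ℝ) (prev : Fin (n + 1)),
      l.count c ≤ 1 →
      ∀ e ∈ mkEntries d t prev l, ∀ e' ∈ mkEntries d t prev l,
        e.cust = c → e'.cust = c → e.arr = e'.arr := by
  intro l
  induction l with
  | nil => intro t prev _ e he; simp [mkEntries] at he
  | cons c0 rest ih =>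
      intro t prev hcount e he e' he' hc hc'
      rw [List.count_cons] at hcount
      simp only [mkEntries, List.mem_cons] at he he'
      have hnotin : c0 = c → c ∉ rest := by
        intro h
        subst h
        simp only [beq_self_eq_true, if_true] at hcount
        have : rest.count c0 = 0 := by omega
        exact List.count_eq_zero.1 this
      rcases he with rfl | rfl | he <;> rcases he' with rfl | rfl | he'
      · rfl
      · rfl
      · exact absurd (hc' ▸ mk_mem_cust _ _ _ _ he') (hnotin hc)
      · rfl
      · rfl
      · exact absurd (hc' ▸ mk_mem_cust _ _ _ _ he') (hnotin hc)
      · exact absurd (hc ▸ mk_mem_cust _ _ _ _ he) (hnotin hc')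
      · exact absurd (hc ▸ mk_mem_cust _ _ _ _ he) (hnotin hc')
      · refine ih _ _ ?_ e he e' he' hc hc'
        split at hcount <;> omega

lemma mk_alt {d : Fin (n + 1) → Fin (n + 1) → ℝ} :
    ∀ (l : List (Fin n)) (t : ℝ) (prev : Fin (n + 1)) (r : ℕ),
      ((mkEntries d t prev l).take r).countP (fun e => decide (e.kind = OpKind.pick))
        ≤ ((mkEntries d t prev l).take r).countP (fun e => decide (e.kind = OpKind.drop))
      ∧ ((mkEntries d t prev l).take r).countP (fun e => decide (e.kind = OpKind.drop))
        ≤ ((mkEntries d t prev l).take r).countP (fun e => decide (e.kind = OpKind.pick)) + 1 := by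
  intro l
  induction l with
  | nil => intro t prev r; simp [mkEntries]
  | cons c0 rest ih =>
      intro t prev r
      match r with
      | 0 => simp
      | 1 => simp [mkEntries, List.countP_cons]
      | (r + 2) =>
          have htk := ih (t + d prev (loc c0)) (loc c0) r
          simp [mkEntries, List.take_succ_cons, List.countP_cons] at htk ⊢
          omega

lemma mk_last {d : Fin (n + 1) → Fin (n + 1) → ℝ} :
    ∀ (l : List (Fin n)) (t : ℝ) (prev : Fin (n + 1)), l ≠ [] →
      ∃ (e : Entry n), (mkEntries d t prev l).getLast? = some e ∧
        e.dep + d (loc e.cust) 0 = t + pathLen d (prev :: (l.map loc ++ [0])) := by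
  intro l
  induction l with
  | nil => intro t prev h; exact absurd rfl h
  | cons c0 rest ih =>
      intro t prev _
      cases rest with
      | nil =>
          refine ⟨⟨c0, OpKind.pick, t + d prev (loc c0), t + d prev (loc c0)⟩, ?_, ?_⟩
          · rfl
          · simp only [List.map_cons, List.map_nil, List.nil_append, List.cons_append,
              pathLen_cons_cons, pathLen_single]
            ring
      | cons c1 rest' =>
          obtain ⟨e, h1, h2⟩ := ih (t + d prev (loc c0)) (loc c0) (by simp)
          refine ⟨e, ?_, ?_⟩
          · have hne : mkEntries d (t + d prev (loc c0)) (loc c0) (c1 :: rest') ≠ [] := by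
              simp [mkEntries]
            show (_ :: _ :: mkEntries d (t + d prev (loc c0)) (loc c0) (c1 :: rest')).getLast?
              = some e
            rw [getLast?_cons_of_ne_nil _ (List.cons_ne_nil _ _),
              getLast?_cons_of_ne_nil _ hne, h1]
          · rw [h2]
            simp only [List.map_cons, List.cons_append, pathLen_cons_cons]
            ring

end Aux

end VRPRPD


namespace VRPRPD

section Main

variable {n m : ℕ}

lemma mem_of_getLast?' {α : Type*} {l : List α} {a : α} (h : l.getLast? = some a) :
    a ∈ l := by
  rcases List.getLast?_eq_some_iff.mp h with ⟨ys, rfl⟩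
  simp

lemma returnTime_none {d : Fin (n + 1) → Fin (n + 1) → ℝ} {S : Schedule n m} {v : Fin m}
    (h : (S v).getLast? = none) : returnTime d S v = 0 := by
  unfold returnTime
  rw [h]

lemma returnTime_some {d : Fin (n + 1) → Fin (n + 1) → ℝ} {S : Schedule n m} {v : Fin m}
    {e : Entry n} (h : (S v).getLast? = some e) :
    returnTime d S v = e.dep + d (loc e.cust) 0 := by
  unfold returnTime
  rw [h]

lemma schedule_to_routes {d : Fin (n + 1) → Fin (n + 1) → ℝ}
    (hd_nonneg : ∀ i j, 0 ≤ d i j) (hd_tri : ∀ i l j, d i j ≤ d i l + d l j)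
    {p : Fin n → ℝ} {kcap : ℕ} {S : Schedule n m} (hF : Feasible d p kcap S) :
    ∃ routes : Fin m → List (Fin n),
      IsPartition routes ∧ maxTour d routes ≤ makespan d S := by
  refine ⟨fun v => dropCusts (S v), ?_, ?_⟩
  · intro c
    simp only [count_dropCusts]
    exact hF.drop_once c
  · have hgood : ∀ v, Good d 0 0 (S v) := by
      intro v
      refine toGood _ _ _ ?_ (hF.arr_le_dep v) (hF.travel v)
      intro e he
      simpa using hF.first_arr v e he
    refine foldr_max_le _ _ _ ?_
    intro v _
    cases hroute : dropCusts (S v) with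
    | nil =>
        show tourLen d (dropCusts (S v)) ≤ returnTime d S v
        rw [hroute]
        show (0 : ℝ) ≤ returnTime d S v
        cases hL : (S v).getLast? with
        | none => rw [returnTime_none hL]
        | some e =>
            rw [returnTime_some hL]
            have he : e ∈ S v := mem_of_getLast?' hL
            have h1 : (0 : ℝ) ≤ e.dep := good_dep_lb hd_nonneg (hgood v) e he
            have h2 := hd_nonneg (loc e.cust) 0
            linarith
    | cons c0 rest =>
        show tourLen d (dropCusts (S v)) ≤ returnTime d S v
        have hSne : S v ≠ [] := by
          intro h
          rw [h] at hroute
          simp [dropCusts] at hroute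
        obtain ⟨e, hL⟩ := List.getLast?_isSome.mpr hSne |> Option.isSome_iff_exists.mp
        have hmain := good_tour hd_nonneg hd_tri (hgood v) e hL
        have hrt : returnTime d S v = e.dep + d (loc e.cust) 0 := returnTime_some hL
        have htl : tourLen d (dropCusts (S v))
            = pathLen d ((0 : Fin (n + 1)) :: (dropCusts (S v)).map loc ++ [(0 : Fin (n + 1))]) := by
          rw [hroute]
          rfl
        rw [htl, hrt]
        simpa using hmain

lemma routes_to_schedule {d : Fin (n + 1) → Fin (n + 1) → ℝ}
    (hd_refl : ∀ i, d i i = 0)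
    {p : Fin n → ℝ} (hp : ∀ c, p c = 0) {kcap : ℕ} (hk1 : 1 ≤ kcap)
    {routes : Fin m → List (Fin n)} (hpart : IsPartition routes) :
    ∃ S : Schedule n m, Feasible d p kcap S ∧ makespan d S = maxTour d routes := by
  refine ⟨fun v => mkEntries d 0 0 (routes v), ?_, ?_⟩
  · constructor
    · intro c
      simp only [countOp, mk_countP]
      exact hpart c
    · intro c
      simp only [countOp, mk_countP]
      exact hpart c
    · intro v e he
      exact good_arr_le_dep (mk_good hd_refl (routes v) 0 0) e he
    · intro v e he
      simpa using good_head (mk_good hd_refl (routes v) 0 0) e he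
    · intro v r h
      exact good_travel (mk_good hd_refl (routes v) 0 0) r h
    · intro v r
      have h := mk_alt (d := d) (routes v) 0 0 r
      unfold loadAfter
      omega
    · intro v r
      have h := mk_alt (d := d) (routes v) 0 0 r
      unfold loadAfter
      omega
    · intro c v w eD eP hDv hPw hDc hDk hPc hPk
      have hcv : c ∈ routes v := hDc ▸ mk_mem_cust _ _ _ _ hDv
      have hcw : c ∈ routes w := hPc ▸ mk_mem_cust _ _ _ _ hPw
      have hsum := hpart c
      have hvw : v = w := by
        by_contra hne
        have hv1 : 1 ≤ (routes v).count c := List.count_pos_iff.mpr hcv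
        have hw1 : 1 ≤ (routes w).count c := List.count_pos_iff.mpr hcw
        have h2 : (2 : ℕ) ≤ ∑ x : Fin m, (routes x).count c := by
          have hsub : ({v, w} : Finset (Fin m)).sum (fun x => (routes x).count c)
              ≤ ∑ x : Fin m, (routes x).count c :=
            Finset.sum_le_sum_of_subset (Finset.subset_univ _)
          rw [Finset.sum_pair hne] at hsub
          omega
        omega
      subst hvw
      have hc1 : (routes v).count c ≤ 1 := by
        have hle : (routes v).count c ≤ ∑ x : Fin m, (routes x).count c :=
          Finset.single_le_sum (f := fun x => (routes x).count c)
            (fun i _ => Nat.zero_le _) (Finset.mem_univ v)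
        omega
      have harr : eD.arr = eP.arr :=
        mk_arr_eq c (routes v) 0 0 hc1 eD hDv eP hPw hDc hPc
      have hdep : eP.arr = eP.dep := mk_arr_dep _ _ _ eP hPw
      rw [hp c, add_zero]
      exact le_of_eq (by rw [harr, hdep])
  · unfold makespan maxTour
    congr 1
    refine List.map_congr_left ?_
    intro v _
    cases hroute : routes v with
    | nil =>
        have h0 : (returnTime d (fun v => mkEntries d 0 0 (routes v)) v) = 0 := by
          refine returnTime_none ?_
          show (mkEntries d 0 0 (routes v)).getLast? = none
          rw [hroute]
          rfl
        rw [h0]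
        rfl
    | cons c0 rest =>
        obtain ⟨e, h1, h2⟩ := mk_last (routes v) 0 0 (by rw [hroute]; simp)
        have h0 : (returnTime d (fun v => mkEntries d 0 0 (routes v)) v)
            = e.dep + d (loc e.cust) 0 := returnTime_some h1
        rw [h0]
        rw [hroute] at h2
        have htl : tourLen d (c0 :: rest)
            = pathLen d ((0 : Fin (n + 1)) :: ((c0 :: rest).map loc ++ [(0 : Fin (n + 1))])) := rfl
        rw [htl]
        simpa using h2

end Main

end VRPRPD

namespace VRPRPD

/-- With nonnegative travel times vanishing on the diagonal and
satisfying the triangle inequality, zero processing times, and non-binding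
vehicle capacity `kcap ≥ n`, the optimal (minimum) makespan over all feasible
VRP-RPD schedules equals the min-max VRP value. This is the correctness of the
reduction used in the paper's NP-hardness proof. -/
theorem optMakespan_eq_minmaxVRP (n m kcap : ℕ)
    (d : Fin (n + 1) → Fin (n + 1) → ℝ) (p : Fin n → ℝ)
    (hd_nonneg : ∀ i j, 0 ≤ d i j) (hd_refl : ∀ i, d i i = 0)
    (hd_tri : ∀ i l j, d i j ≤ d i l + d l j)
    (hp : ∀ c, p c = 0) (hk1 : 1 ≤ kcap) (hk : n ≤ kcap) :
    optMakespan n m d p kcap = minmaxVRP n m d := by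
  classical
  set A := {T : ℝ | ∃ S : Schedule n m, Feasible d p kcap S ∧ makespan d S = T} with hA
  set B := {T : ℝ | ∃ routes : Fin m → List (Fin n),
    IsPartition routes ∧ maxTour d routes = T} with hB
  have hBA : B ⊆ A := by
    rintro T ⟨routes, hpart, rfl⟩
    obtain ⟨S, hSF, hmk⟩ := routes_to_schedule hd_refl hp hk1 hpart
    exact ⟨S, hSF, hmk⟩
  have hAB : ∀ T ∈ A, ∃ T' ∈ B, T' ≤ T := by
    rintro T ⟨S, hSF, rfl⟩
    obtain ⟨routes, hpart, hle⟩ := schedule_to_routes hd_nonneg hd_tri hSF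
    exact ⟨maxTour d routes, ⟨routes, hpart, rfl⟩, hle⟩
  have hBbdd : BddBelow B := by
    refine ⟨0, ?_⟩
    rintro T ⟨routes, _, rfl⟩
    exact foldr_max_nonneg _
  have hAbdd : BddBelow A := by
    refine ⟨0, ?_⟩
    rintro T ⟨S, _, rfl⟩
    exact foldr_max_nonneg _
  show sInf A = sInf B
  rcases Set.eq_empty_or_nonempty A with hAe | hAne
  · have hBe : B = ∅ := by
      rw [Set.eq_empty_iff_forall_notMem]
      intro T hT
      exact Set.eq_empty_iff_forall_notMem.mp hAe T (hBA hT)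
    rw [hAe, hBe]
  · have hBne : B.Nonempty := by
      obtain ⟨T, hT⟩ := hAne
      obtain ⟨T', hT', _⟩ := hAB T hT
      exact ⟨T', hT'⟩
    refine le_antisymm (csInf_le_csInf hAbdd hBne hBA) ?_
    refine le_csInf hAne ?_
    intro T hT
    obtain ⟨T', hT', hle⟩ := hAB T hT
    exact le_trans (csInf_le hBbdd hT') hle

end VRPRPD
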